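/- (Fully congested radial case: characterization of type T-P Braess' paradox.) Fix R ≥ 2, Q ∈ ℝ^R with Q_r > 0 for all r, ρ > 0, β̂ ∈ ℝ^R with β̂ ≥ 0, μ ∈ ℝ^R, f̂ ∈ ℝ^R, and set c_r := β̂_r + ρ·Q_r·f̂_r + ρ·μ_r. For α̂ ∈ ℝ^R with α̂_r > 0 for all r, define ω_r(α̂) := 1/(α̂_r + ρ²Q_r), ω̃_r(α̂) := ω_r/∑_s ω_s, η(α̂) := (1 + ∑_s ω_s·c_s)/(∑_s ω_s), x_r(α̂) := ω_r·(η − c_r), λ_r(α̂) := Q_r·(ρ·x_r(α̂) + f̂_r) + μ_r, and Φ_P(α̂) := ∑_r [ (1/2)·Q_r·(ρ·x_r(α̂) + f̂_r)² + μ_r·(ρ·x_r(α̂) + f̂_r) ]. Fix a point α̂⁰ with all α̂⁰_r > 0 and x_r(α̂⁰) > 0 for all r, and a route r. Then the partial derivative of Φ_P with respect to α̂_r at α̂⁰ exists, equals −ρ·x_r·ω_r·∑_{r'} ω̃_{r'}·(λ_r − λ_{r'}) (evaluated at α̂⁰), and is strictly negative if and only if ∑_{r'} ω̃_{r'}(α̂⁰)·(λ_r(α̂⁰)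 − λ_{r'}(α̂⁰)) > 0. That is, type T-P Braess' paradox occurs when perturbing route r if and only if ∑_{r'} ω̃_{r'}·(λ_r − λ_{r'}) > 0. -/

import Mathlib

private lemma aux_eta (A W C cr : ℝ) (hW : W ≠ 0) :
    A * (A * ((1 + C) / W - cr)) / W
      = (-A ^ 2 * cr * W - (1 + C) * -A ^ 2) / W ^ 2 := by
  field_simp
  ring

/-- Fully congested radial power network with non-overlapping active routes:
the partial derivative of the power system social cost with respect to `α̂_r` equals
`−ρ x_r ω_r ∑_{r'} ω̃_{r'} (λ_r − λ_{r'})`, and it is strictly negative (type T-P Braess'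
paradox when perturbing route `r`) iff `∑_{r'} ω̃_{r'} (λ_r − λ_{r'}) > 0`. -/
theorem TP_fully_congested {R : ℕ} (hR : 2 ≤ R)
    (Q : Fin R → ℝ) (hQ : ∀ r, 0 < Q r) (ρ : ℝ) (hρ : 0 < ρ)
    (bhat : Fin R → ℝ) (hb : ∀ r, 0 ≤ bhat r)
    (μ fhat : Fin R → ℝ)
    (a0 : Fin R → ℝ) (ha0 : ∀ r, 0 < a0 r) (r : Fin R) :
    let c : Fin R → ℝ := fun s => bhat s + ρ * Q s * fhat s + ρ * μ s
    let ω : (Fin R → ℝ) → Fin R → ℝ := fun a s => (a s + ρ ^ 2 * Q s)⁻¹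
    let ωt : (Fin R → ℝ) → Fin R → ℝ := fun a s => ω a s / ∑ u, ω a u
    let η : (Fin R → ℝ) → ℝ := fun a => (1 + ∑ u, ω a u * c u) / ∑ u, ω a u
    let x : (Fin R → ℝ) → Fin R → ℝ := fun a s => ω a s * (η a - c s)
    let lam : (Fin R → ℝ) → Fin R → ℝ := fun a s => Q s * (ρ * x a s + fhat s) + μ s
    let ΦP : (Fin R → ℝ) → ℝ := fun a =>
      ∑ s, ((1 / 2) * Q s * (ρ * x a s + fhat s) ^ 2 + μ s * (ρ * x a s + fhat s))
    (∀ s, 0 < x a0 s) →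
      HasDerivAt (fun t : ℝ => ΦP (Function.update a0 r t))
        (-(ρ * x a0 r * ω a0 r * ∑ u, ωt a0 u * (lam a0 r - lam a0 u))) (a0 r) ∧
      (-(ρ * x a0 r * ω a0 r * ∑ u, ωt a0 u * (lam a0 r - lam a0 u)) < 0 ↔
        0 < ∑ u, ωt a0 u * (lam a0 r - lam a0 u)) := by
  intro c ω ωt η x lam ΦP hx
  classical
  have hden : ∀ s, 0 < a0 s + ρ ^ 2 * Q s := by
    intro s; have h1 := ha0 s; have h2 := hQ s; positivity
  have hω : ∀ s, 0 < ω a0 s := fun s => inv_pos.mpr (hden s)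
  have hWpos : 0 < ∑ u, ω a0 u :=
    Finset.sum_pos (fun s _ => hω s) ⟨r, Finset.mem_univ r⟩
  have hWne : (∑ u, ω a0 u) ≠ 0 := ne_of_gt hWpos
  have hupd : Function.update a0 r (a0 r) = a0 := Function.update_eq_self r a0
  -- derivatives of the weights
  have hws : ∀ s, HasDerivAt (fun t : ℝ => (Function.update a0 r t s + ρ ^ 2 * Q s)⁻¹)
      (if s = r then -(ω a0 r) ^ 2 else 0) (a0 r) := by
    intro s
    by_cases hs : s = r
    · subst hs
      have h1 : (fun t : ℝ => (Function.update a0 s t s + ρ ^ 2 * Q s)⁻¹)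
          = fun t : ℝ => (t + ρ ^ 2 * Q s)⁻¹ := by
        funext t; rw [Function.update_self]
      have h2 : HasDerivAt (fun t : ℝ => t + ρ ^ 2 * Q s) 1 (a0 s) :=
        (hasDerivAt_id _).add_const _
      have h3 := h2.fun_inv (ne_of_gt (hden s))
      rw [h1, if_pos rfl]
      convert! h3 using 1
      simp only [ω]
      field_simp
    · have h1 : (fun t : ℝ => (Function.update a0 r t s + ρ ^ 2 * Q s)⁻¹)
          = fun _ : ℝ => (a0 s + ρ ^ 2 * Q s)⁻¹ := by
        funext t; rw [Function.update_of_ne hs]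
      rw [h1, if_neg hs]
      exact hasDerivAt_const _ _
  -- derivative of the total weight
  have hWd : HasDerivAt (fun t : ℝ => ∑ u, (Function.update a0 r t u + ρ ^ 2 * Q u)⁻¹)
      (-(ω a0 r) ^ 2) (a0 r) := by
    have h := HasDerivAt.fun_sum (fun u (_ : u ∈ Finset.univ) => hws u)
    simpa using h
  -- derivative of the weighted sum of c
  have hCd : HasDerivAt (fun t : ℝ => ∑ u, (Function.update a0 r t u + ρ ^ 2 * Q u)⁻¹ * c u)
      (-(ω a0 r) ^ 2 * c r) (a0 r) := by
    have h := HasDerivAt.fun_sum (fun u (_ : u ∈ Finset.univ) => (hws u).mul_const (c u))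
    simpa using h
  -- derivative of η
  have hηd : HasDerivAt (fun t : ℝ =>
      (1 + ∑ u, (Function.update a0 r t u + ρ ^ 2 * Q u)⁻¹ * c u) /
        ∑ u, (Function.update a0 r t u + ρ ^ 2 * Q u)⁻¹)
      (ω a0 r * x a0 r / ∑ u, ω a0 u) (a0 r) := by
    have hnum : HasDerivAt (fun t : ℝ =>
        1 + ∑ u, (Function.update a0 r t u + ρ ^ 2 * Q u)⁻¹ * c u)
        (-(ω a0 r) ^ 2 * c r) (a0 r) := hCd.const_add 1
    have hWne' : (∑ u, (Function.update a0 r (a0 r) u + ρ ^ 2 * Q u)⁻¹) ≠ 0 := by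
      rw [hupd]; exact hWne
    have h := hnum.fun_div hWd hWne'
    rw [hupd] at h
    have hWne2 : (∑ u, (a0 u + ρ ^ 2 * Q u)⁻¹) ≠ 0 := hWne
    convert! h using 1
    simp only [x, η, ω]
    exact aux_eta _ _ _ _ hWne2
  -- per-route derivative of x
  set d : Fin R → ℝ := fun s =>
    (if s = r then -(ω a0 r) ^ 2 else 0) * (η a0 - c s) +
      ω a0 s * (ω a0 r * x a0 r / ∑ u, ω a0 u) with hd
  have hxd : ∀ s, HasDerivAt (fun t : ℝ =>
      (Function.update a0 r t s + ρ ^ 2 * Q s)⁻¹ *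
        ((1 + ∑ u, (Function.update a0 r t u + ρ ^ 2 * Q u)⁻¹ * c u) /
          (∑ u, (Function.update a0 r t u + ρ ^ 2 * Q u)⁻¹) - c s))
      (d s) (a0 r) := by
    intro s
    have h := (hws s).fun_mul (hηd.sub_const (c s))
    rw [hupd] at h
    convert h using 1
  -- per-route derivative of the summand of ΦP
  have hsum : ∀ s, HasDerivAt (fun t : ℝ =>
      (1 / 2) * Q s * (ρ * ((Function.update a0 r t s + ρ ^ 2 * Q s)⁻¹ *
        ((1 + ∑ u, (Function.update a0 r t u + ρ ^ 2 * Q u)⁻¹ * c u) /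
          (∑ u, (Function.update a0 r t u + ρ ^ 2 * Q u)⁻¹) - c s)) + fhat s) ^ 2 +
      μ s * (ρ * ((Function.update a0 r t s + ρ ^ 2 * Q s)⁻¹ *
        ((1 + ∑ u, (Function.update a0 r t u + ρ ^ 2 * Q u)⁻¹ * c u) /
          (∑ u, (Function.update a0 r t u + ρ ^ 2 * Q u)⁻¹) - c s)) + fhat s))
      (lam a0 s * (ρ * d s)) (a0 r) := by
    intro s
    have hy : HasDerivAt (fun t : ℝ =>
        ρ * ((Function.update a0 r t s + ρ ^ 2 * Q s)⁻¹ *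
          ((1 + ∑ u, (Function.update a0 r t u + ρ ^ 2 * Q u)⁻¹ * c u) /
            (∑ u, (Function.update a0 r t u + ρ ^ 2 * Q u)⁻¹) - c s)) + fhat s)
        (ρ * d s) (a0 r) := ((hxd s).const_mul ρ).add_const _
    have h1 := (hy.fun_pow 2).const_mul ((1 / 2) * Q s)
    have h2 := hy.const_mul (μ s)
    have h := h1.fun_add h2
    rw [hupd] at h
    convert! h using 1
    simp only [lam, x, η, ω]
    push_cast
    ring
  have hΦ := HasDerivAt.fun_sum (fun s (_ : s ∈ Finset.univ) => hsum s)
  -- algebraic identity for the derivative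
  have hone : ∑ u, ωt a0 u = 1 := by
    simp only [ωt]
    rw [← Finset.sum_div]
    exact div_self hWne
  have hS : ∑ u, ωt a0 u * (lam a0 r - lam a0 u)
      = lam a0 r - ∑ u, ωt a0 u * lam a0 u := by
    calc ∑ u, ωt a0 u * (lam a0 r - lam a0 u)
        = ∑ u, (ωt a0 u * lam a0 r - ωt a0 u * lam a0 u) := by
          exact Finset.sum_congr rfl fun u _ => by ring
      _ = (∑ u, ωt a0 u) * lam a0 r - ∑ u, ωt a0 u * lam a0 u := by
          rw [Finset.sum_sub_distrib, ← Finset.sum_mul]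
      _ = lam a0 r - ∑ u, ωt a0 u * lam a0 u := by rw [hone, one_mul]
  have hsplit : ∀ s, lam a0 s * (ρ * d s)
      = (if s = r then -(ρ * lam a0 r * (ω a0 r * x a0 r)) else 0) +
        ρ * x a0 r * ω a0 r * (ωt a0 s * lam a0 s) := by
    intro s
    by_cases hs : s = r
    · subst hs
      simp only [hd, if_pos rfl, if_true, x, ωt]
      field_simp
    · simp only [hd, if_neg hs, ωt]
      field_simp
      ring
  have heq : (∑ s, lam a0 s * (ρ * d s))
      = -(ρ * x a0 r * ω a0 r * ∑ u, ωt a0 u * (lam a0 r - lam a0 u)) := by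
    calc ∑ s, lam a0 s * (ρ * d s)
        = ∑ s, ((if s = r then -(ρ * lam a0 r * (ω a0 r * x a0 r)) else 0) +
            ρ * x a0 r * ω a0 r * (ωt a0 s * lam a0 s)) :=
          Finset.sum_congr rfl fun s _ => hsplit s
      _ = -(ρ * lam a0 r * (ω a0 r * x a0 r)) +
            ρ * x a0 r * ω a0 r * ∑ s, ωt a0 s * lam a0 s := by
          rw [Finset.sum_add_distrib, Finset.sum_ite_eq', ← Finset.mul_sum]
          simp
      _ = -(ρ * x a0 r * ω a0 r * ∑ u, ωt a0 u * (lam a0 r - lam a0 u)) := by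
          rw [hS]; ring
  rw [heq] at hΦ
  refine ⟨hΦ, ?_⟩
  have hA : 0 < ρ * x a0 r * ω a0 r := by
    have h1 := hx r
    have h2 := hω r
    positivity
  rw [neg_lt_zero]
  exact mul_pos_iff_of_pos_left hA
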